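/- Let M be a finite matroid on ground set E and let ρ : E → V and ρ' : E → V' be two representations of M over the field F₂ = ZMod 2. Then there exists a unique F₂-linear isomorphism φ : V → V' such that ρ' = φ ∘ ρ. -/

import Mathlib

/-- `ρ` is a representation of the matroid `M` over the field `K`: a subset of the ground
set is independent iff `ρ` is injective on it and its image is `K`-linearly independent,
and the image of the ground set spans `V`. -/
def Matroid.IsRep {α : Type*} (M : Matroid α) (K : Type*) [Field K] {V : Type*}
    [AddCommGroup V] [Module K V] (ρ : α → V) : Prop :=
  (∀ S ⊆ M.E, (M.Indep S ↔ Set.InjOn ρ S ∧ LinearIndependent K ((↑) : (ρ '' S) → V))) ∧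
    Submodule.span K (ρ '' M.E) = ⊤

open Set Submodule
section aux

variable {α K V : Type*} [Field K] [AddCommGroup V] [Module K V]
variable {M : Matroid α} {ρ : α → V}

/-- Key lemma: for independent `X` and `e ∈ E \ X`, `insert e X` is independent iff
`ρ e` is outside the span of `ρ '' X`. -/
lemma Matroid.IsRep.insert_indep_iff (h : M.IsRep K ρ)
    {X : Set α} (hX : M.Indep X) {e : α} (he : e ∈ M.E) (heX : e ∉ X) :
    M.Indep (insert e X) ↔ ρ e ∉ Submodule.span K (ρ '' X) := by
  have hXE := hX.subset_ground
  obtain ⟨hXinj, hXli⟩ := (h.1 X hXE).mp hX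
  constructor
  · intro hind hmem
    obtain ⟨hinj, hli⟩ := (h.1 _ (Set.insert_subset he hXE)).mp hind
    have hρ : ρ e ∉ ρ '' X := by
      rintro ⟨x, hx, hxe⟩
      exact heX (hinj (Set.mem_insert_of_mem _ hx) (Set.mem_insert _ _) hxe ▸ hx)
    rw [Set.image_insert_eq] at hli
    exact ((linearIndepOn_id_insert hρ).mp hli).2 hmem
  · intro hsp
    have hρ : ρ e ∉ ρ '' X := fun hx => hsp (Submodule.subset_span hx)
    refine (h.1 _ (Set.insert_subset he hXE)).mpr ⟨?_, ?_⟩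
    · exact (Set.injOn_insert heX).mpr ⟨hXinj, hρ⟩
    · rw [Set.image_insert_eq]
      exact (linearIndepOn_id_insert hρ).mpr ⟨hXli, hsp⟩

/-- Coordinate lemma: the `i`-th coordinate of `v` vanishes iff `v` lies in the span of
the other basis vectors. -/
lemma repr_eq_zero_iff_mem_span {ι : Type*} [Fintype ι] (b : Module.Basis ι K V) (v : V) (i : ι) :
    b.repr v i = 0 ↔ v ∈ Submodule.span K (b '' {j | j ≠ i}) := by
  constructor
  · intro h0
    have hv := b.sum_repr v
    rw [← hv]
    refine Submodule.sum_mem _ fun j _ => ?_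
    by_cases hji : j = i
    · subst hji; rw [h0, zero_smul]; exact Submodule.zero_mem _
    · exact Submodule.smul_mem _ _ (Submodule.subset_span ⟨j, hji, rfl⟩)
  · intro hmem
    have : Submodule.span K (b '' {j | j ≠ i}) ≤
        LinearMap.ker ((Finsupp.lapply i).comp b.repr.toLinearMap) := by
      rw [Submodule.span_le]
      rintro _ ⟨j, hji, rfl⟩
      simp [Finsupp.single_eq_of_ne' hji]
    simpa using this hmem

/-- family linear independence over a subset from the `IsRep` data. -/
lemma fam_li {B : Set α} (hinj : Set.InjOn ρ B)
    (hli : LinearIndependent K ((↑) : (ρ '' B) → V)) :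
    LinearIndependent K (fun i : B => ρ i) := by
  have : (fun i : B => ρ i) =
      ((↑) : (ρ '' B) → V) ∘ (fun i : B => (⟨ρ i, ⟨i, i.2, rfl⟩⟩ : ρ '' B)) := rfl
  rw [this]
  exact hli.comp _ (fun x y hxy => Subtype.ext (hinj x.2 y.2 (congrArg Subtype.val hxy)))

lemma fam_span {B : Set α} (h : M.IsRep K ρ) (hB : M.IsBase B) :
    ⊤ ≤ Submodule.span K (Set.range fun i : B => ρ i) := by
  have hr : (Set.range fun i : B => ρ i) = ρ '' B := (Set.image_eq_range ρ B).symm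
  rw [hr, ← h.2, Submodule.span_le]
  rintro _ ⟨e, he, rfl⟩
  by_cases heB : e ∈ B
  · exact Submodule.subset_span ⟨e, heB, rfl⟩
  · by_contra hmem
    have := (h.insert_indep_iff hB.indep he heB).mpr hmem
    exact (hB.insert_dep ⟨he, heB⟩).not_indep this

lemma img_eq {B : Set α} (c : Module.Basis B K V) (hc : ∀ i : B, c i = ρ i) (i : B) :
    c '' {j | j ≠ i} = ρ '' (B \ {(i : α)}) := by
  ext w
  constructor
  · rintro ⟨j, hji, rfl⟩
    exact ⟨j, ⟨j.2, fun hj => hji (Subtype.ext hj)⟩, (hc j).symm⟩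
  · rintro ⟨x, ⟨hxB, hxi⟩, rfl⟩
    exact ⟨⟨x, hxB⟩, fun hx => hxi (congrArg Subtype.val hx), hc ⟨x, hxB⟩⟩

/-- Matroid characterization of the coordinates of `ρ e` in the basis coming from a base. -/
lemma repr_zero_iff_matroid {B : Set α} [Fintype B] (h : M.IsRep K ρ) (hB : M.IsBase B)
    (c : Module.Basis B K V) (hc : ∀ i : B, c i = ρ i) {e : α} (he : e ∈ M.E) (heB : e ∉ B)
    (i : B) : c.repr (ρ e) i = 0 ↔ ¬ M.Indep (insert e (B \ {(i : α)})) := by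
  rw [repr_eq_zero_iff_mem_span, img_eq c hc i,
    h.insert_indep_iff (hB.indep.subset Set.diff_subset) he (fun hx => heB hx.1)]
  tauto

end aux

/-- **Rigidity of binary matroids**: two representations of the same finite matroid over
`𝔽₂` differ by a unique linear isomorphism. -/
theorem rigidity_of_binary_matroids {α V V' : Type*}
    [AddCommGroup V] [Module (ZMod 2) V] [AddCommGroup V'] [Module (ZMod 2) V']
    (M : Matroid α) [M.Finite] (ρ : α → V) (ρ' : α → V')
    (h : M.IsRep (ZMod 2) ρ) (h' : M.IsRep (ZMod 2) ρ') :
    ∃! φ : V ≃ₗ[ZMod 2] V', ∀ e ∈ M.E, ρ' e = φ (ρ e) := by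
  classical
  obtain ⟨B, hB⟩ := M.exists_isBase
  have hBE : B ⊆ M.E := hB.subset_ground
  have hBfin : B.Finite := M.set_finite B hBE
  haveI : Fintype B := hBfin.fintype
  obtain ⟨hBinj, hBli⟩ := (h.1 B hBE).mp hB.indep
  obtain ⟨hBinj', hBli'⟩ := (h'.1 B hBE).mp hB.indep
  set b : Module.Basis B (ZMod 2) V := Module.Basis.mk (fam_li hBinj hBli) (fam_span h hB)
  set b' : Module.Basis B (ZMod 2) V' := Module.Basis.mk (fam_li hBinj' hBli') (fam_span h' hB)
  have hb : ∀ i : B, b i = ρ i := fun i => Module.Basis.mk_apply _ _ i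
  have hb' : ∀ i : B, b' i = ρ' i := fun i => Module.Basis.mk_apply _ _ i
  -- coordinates agree
  have hrepr : ∀ e ∈ M.E, ∀ i : B, b.repr (ρ e) i = b'.repr (ρ' e) i := by
    intro e he i
    by_cases heB : e ∈ B
    · have h1 : ρ e = b ⟨e, heB⟩ := (hb ⟨e, heB⟩).symm
      have h2 : ρ' e = b' ⟨e, heB⟩ := (hb' ⟨e, heB⟩).symm
      rw [h1, h2, Module.Basis.repr_self, Module.Basis.repr_self]
    · have hz : (b.repr (ρ e) i = 0 ↔ b'.repr (ρ' e) i = 0) := by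
        rw [repr_zero_iff_matroid h hB b hb he heB i,
          repr_zero_iff_matroid h' hB b' hb' he heB i]
      have hcases : ∀ x y : ZMod 2, (x = 0 ↔ y = 0) → x = y := by decide
      exact hcases _ _ hz
  -- the isomorphism
  set φ : V ≃ₗ[ZMod 2] V' := b.equiv b' (Equiv.refl B)
  have hφb : ∀ i : B, φ (b i) = b' i := fun i => b.equiv_apply i b' (Equiv.refl B)
  have hmain : ∀ e ∈ M.E, ρ' e = φ (ρ e) := by
    intro e he
    have h1 : ρ e = ∑ i : B, b.repr (ρ e) i • b i := (b.sum_repr (ρ e)).symm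
    have h2 : ρ' e = ∑ i : B, b'.repr (ρ' e) i • b' i := (b'.sum_repr (ρ' e)).symm
    rw [h1, map_sum, h2]
    refine Finset.sum_congr rfl fun i _ => ?_
    rw [map_smul, hφb, hrepr e he i]
  refine ⟨φ, hmain, ?_⟩
  intro ψ hψ
  have : ψ.toLinearMap = φ.toLinearMap := by
    apply LinearMap.ext_on h.2
    rintro _ ⟨e, he, rfl⟩
    simp only [LinearEquiv.coe_coe]
    rw [← hψ e he, ← hmain e he]
  exact LinearEquiv.toLinearMap_injective this
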